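/- For an analytic function f on [0, T] and a Paley-ordered Walsh index m with rank r(m) and negligibility p(m), the Walsh coefficient satisfies |f̂_m| ≤ 2^{−p(m)} · T^{r(m)} · max_{t∈[0,T]} |f^{(r(m))}(t)|, where f̂_m = (1/T) ∫_0^T f(t) w_m(t/T) dt. -/

import Mathlib

/-- The rank of `m`: the number of ones in the binary expansion of `m`. -/
def rank (m : ℕ) : ℕ := (Nat.digits 2 m).sum

/-- The negligibility of `m`: `p(m) = Σ_k (k+1)·m_k`. -/
def neg (m : ℕ) : ℕ := (((Nat.digits 2 m).zipIdx).map fun p => (p.2 + 2) * p.1).sum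

/-- The `m`'th Paley-ordered Walsh function on `[0,1]`:
`w_m(t) = Π_k ((−1)^{⌊2^k t⌋})^{m_k}`. -/
noncomputable def walsh (m : ℕ) (t : ℝ) : ℝ :=
  ∏ i ∈ Finset.range (Nat.digits 2 m).length,
    ((-1 : ℝ) ^ ⌊(2 : ℝ) ^ (i + 1) * t⌋) ^ ((Nat.digits 2 m).getD i 0)

open Set MeasureTheory intervalIntegral

/-! ### arithmetic lemmas -/

lemma my_enumFrom_sum (l : List ℕ) : ∀ n : ℕ,
    ((List.zipIdx l (n+1)).map fun p => (p.2 + 2) * p.1).sum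
      = ((List.zipIdx l n).map fun p => (p.2 + 2) * p.1).sum + l.sum := by
  induction l with
  | nil => simp
  | cons a l ih => intro n; simp [List.zipIdx_cons, ih (n+1)]; ring

lemma rank_zero : rank 0 = 0 := by simp [rank]

lemma neg_zero' : neg 0 = 0 := by simp [neg]

lemma rank_rec {m : ℕ} (hm : m ≠ 0) : rank m = m % 2 + rank (m / 2) := by
  unfold rank
  rw [Nat.digits_def' (by norm_num) (Nat.pos_of_ne_zero hm)]
  simp

lemma neg_rec {m : ℕ} (hm : m ≠ 0) : neg m = 2 * (m % 2) + rank (m / 2) + neg (m / 2) := by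
  unfold neg rank
  rw [Nat.digits_def' (by norm_num) (Nat.pos_of_ne_zero hm)]
  rw [List.zipIdx_cons]
  simp only [List.map_cons, List.sum_cons]
  have := my_enumFrom_sum (Nat.digits 2 (m/2)) 0
  rw [this]; ring_nf

/-! ### walsh lemmas -/

lemma neg_one_zpow_abs (z : ℤ) : |(-1 : ℝ) ^ z| = 1 := by
  rcases Int.even_or_odd z with h | h
  · rw [h.neg_one_zpow]; norm_num
  · rw [h.neg_one_zpow]; norm_num

lemma walsh_zero_eq (t : ℝ) : walsh 0 t = 1 := by simp [walsh]

lemma walsh_abs (m : ℕ) (t : ℝ) : |walsh m t| ≤ 1 := by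
  unfold walsh
  rw [Finset.abs_prod]
  apply Finset.prod_le_one
  · intro i _; positivity
  · intro i _
    rw [abs_pow, neg_one_zpow_abs, one_pow]

lemma walsh_add_one (m : ℕ) (t : ℝ) : walsh m (t + 1) = walsh m t := by
  unfold walsh
  apply Finset.prod_congr rfl
  intro i _
  congr 1
  have : (2:ℝ) ^ (i+1) * (t+1) = 2 ^ (i+1) * t + (2^(i+1) : ℤ) := by push_cast; ring
  rw [this, Int.floor_add_intCast, zpow_add₀ (by norm_num : (-1:ℝ) ≠ 0)]
  have : ((-1:ℝ)) ^ ((2:ℤ)^(i+1)) = 1 := by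
    rw [show ((2:ℤ)^(i+1)) = 2 * 2^i by ring, zpow_mul]
    norm_num
  rw [this, mul_one]

lemma walsh_rec {m : ℕ} (hm : m ≠ 0) (t : ℝ) :
    walsh m t = walsh (m / 2) (2 * t) * ((-1 : ℝ) ^ ⌊2 * t⌋) ^ (m % 2) := by
  unfold walsh
  rw [Nat.digits_def' (by norm_num) (Nat.pos_of_ne_zero hm)]
  rw [List.length_cons, Finset.prod_range_succ']
  congr 1
  · apply Finset.prod_congr rfl
    intro i _
    rw [List.getD_cons_succ]
    have : (2:ℝ) ^ (i + 1 + 1) * t = 2 ^ (i+1) * (2 * t) := by ring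
    rw [this]
  · rw [List.getD_cons_zero]
    norm_num

lemma walsh_measurable (m : ℕ) : Measurable (walsh m) := by
  unfold walsh
  apply Finset.measurable_prod
  intro i _
  apply Measurable.pow _ measurable_const
  have h1 : Measurable fun t : ℝ => ⌊(2:ℝ)^(i+1) * t⌋ :=
    Int.measurable_floor.comp (measurable_const.mul measurable_id)
  exact Measurable.comp (f := fun t : ℝ => ⌊(2:ℝ)^(i+1)*t⌋)
    (g := fun z : ℤ => (-1:ℝ)^z) (measurable_from_top) h1

/-! ### iterated derivative helpers -/

lemma itd_contDiffOn {f : ℝ → ℝ} {U : Set ℝ} (hU : IsOpen U)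
    (hf : ContDiffOn ℝ (⊤ : ℕ∞) f U) (n : ℕ) :
    ContDiffOn ℝ (⊤ : ℕ∞) (iteratedDeriv n f) U := by
  induction n with
  | zero => simpa [iteratedDeriv_zero] using hf
  | succ n ih =>
    rw [iteratedDeriv_succ]
    exact ih.deriv_of_isOpen hU (by exact_mod_cast le_top)

lemma itd_diffAt {f : ℝ → ℝ} {U : Set ℝ} (hU : IsOpen U)
    (hf : ContDiffOn ℝ (⊤ : ℕ∞) f U) (n : ℕ) {x : ℝ} (hx : x ∈ U) :
    DifferentiableAt ℝ (iteratedDeriv n f) x :=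
  ((itd_contDiffOn hU hf n).differentiableOn (by simp) x hx).differentiableAt
    (hU.mem_nhds hx)

lemma itd_comp_const_mul {f : ℝ → ℝ} {U : Set ℝ} (hU : IsOpen U)
    (hf : ContDiffOn ℝ (⊤ : ℕ∞) f U) (c : ℝ) (n : ℕ) :
    ∀ x : ℝ, c * x ∈ U →
      iteratedDeriv n (fun y => f (c * y)) x = c ^ n * iteratedDeriv n f (c * x) := by
  induction n with
  | zero => simp
  | succ n ih =>
    intro x hx
    have hV : IsOpen {y : ℝ | c * y ∈ U} := hU.preimage (continuous_const.mul continuous_id)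
    rw [iteratedDeriv_succ]
    have hev : iteratedDeriv n (fun y => f (c * y)) =ᶠ[nhds x]
        fun y => c ^ n * iteratedDeriv n f (c * y) := by
      filter_upwards [hV.mem_nhds hx] with y hy
      exact ih y hy
    rw [hev.deriv_eq]
    have h1 : HasDerivAt (iteratedDeriv n f) (iteratedDeriv (n+1) f (c * x)) (c * x) := by
      rw [iteratedDeriv_succ]
      exact (itd_diffAt hU hf n hx).hasDerivAt
    have h2 : HasDerivAt (fun y : ℝ => c * y) c x := by
      simpa using (hasDerivAt_id x).const_mul c
    have h3 := (h1.comp x h2).const_mul (c ^ n)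
    have h4 : HasDerivAt (fun y => c ^ n * iteratedDeriv n f (c * y))
        (c ^ n * (iteratedDeriv (n+1) f (c * x) * c)) x := h3
    rw [h4.deriv]
    ring

lemma itd_add_mul {f₁ f₂ : ℝ → ℝ} {U : Set ℝ} (hU : IsOpen U)
    (h₁ : ContDiffOn ℝ (⊤ : ℕ∞) f₁ U) (h₂ : ContDiffOn ℝ (⊤ : ℕ∞) f₂ U)
    (c₁ c₂ : ℝ) (n : ℕ) :
    ∀ x ∈ U, iteratedDeriv n (fun y => c₁ * f₁ y + c₂ * f₂ y) x
      = c₁ * iteratedDeriv n f₁ x + c₂ * iteratedDeriv n f₂ x := by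
  induction n with
  | zero => simp
  | succ n ih =>
    intro x hx
    rw [iteratedDeriv_succ]
    have hev : iteratedDeriv n (fun y => c₁ * f₁ y + c₂ * f₂ y) =ᶠ[nhds x]
        fun y => c₁ * iteratedDeriv n f₁ y + c₂ * iteratedDeriv n f₂ y := by
      filter_upwards [hU.mem_nhds hx] with y hy
      exact ih y hy
    rw [hev.deriv_eq]
    have h3 : HasDerivAt (fun y => c₁ * iteratedDeriv n f₁ y + c₂ * iteratedDeriv n f₂ y)
        (c₁ * iteratedDeriv (n+1) f₁ x + c₂ * iteratedDeriv (n+1) f₂ x) x := by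
      have k₁ := ((itd_diffAt hU h₁ n hx).hasDerivAt).const_mul c₁
      have k₂ := ((itd_diffAt hU h₂ n hx).hasDerivAt).const_mul c₂
      have := k₁.add k₂
      rw [iteratedDeriv_succ, iteratedDeriv_succ]
      exact this
    rw [h3.deriv]

/-! ### integrability -/

lemma integrable_mul_w {F w : ℝ → ℝ} (hF : ContinuousOn F (Set.Icc 0 1))
    (hw : Measurable w) (hw1 : ∀ t, |w t| ≤ 1) {a b : ℝ}
    (hab : Set.uIcc a b ⊆ Set.Icc 0 1) :
    IntervalIntegrable (fun t => F t * w t) volume a b := by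
  obtain ⟨C, hC⟩ := isCompact_Icc.exists_bound_of_continuousOn hF
  have hC0 : 0 ≤ C := le_trans (norm_nonneg (F 0)) (hC 0 (by norm_num))
  rw [intervalIntegrable_iff]
  apply MeasureTheory.Integrable.mono' (g := fun _ => C)
    (MeasureTheory.integrableOn_const measure_Ioc_lt_top.ne)
  · have hsub : Set.uIoc a b ⊆ Set.Icc 0 1 := Set.uIoc_subset_uIcc.trans hab
    have h1 : AEStronglyMeasurable F (volume.restrict (Set.Icc (0:ℝ) 1)) :=
      hF.aestronglyMeasurable measurableSet_Icc
    have h2 : AEStronglyMeasurable F (volume.restrict (Set.uIoc a b)) :=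
      h1.mono_measure (Measure.restrict_mono hsub le_rfl)
    exact h2.mul (hw.aestronglyMeasurable)
  · refine (MeasureTheory.ae_restrict_iff' measurableSet_Ioc).mpr (MeasureTheory.ae_of_all _ ?_)
    intro x hx
    have hx1 : x ∈ Set.Icc (0:ℝ) 1 := Set.uIoc_subset_uIcc.trans hab hx
    calc ‖F x * w x‖ = |F x| * |w x| := by rw [Real.norm_eq_abs, abs_mul]
      _ ≤ C * 1 := mul_le_mul (by simpa [Real.norm_eq_abs] using hC x hx1) (hw1 x)
            (abs_nonneg _) hC0
      _ = C := mul_one C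

/-! ### the core bound on `[0,1]` -/

set_option maxHeartbeats 2000000 in
theorem core : ∀ m : ℕ, ∀ f : ℝ → ℝ, AnalyticOnNhd ℝ f (Set.Icc 0 1) →
    ∀ M : ℝ, (∀ t ∈ Set.Icc (0:ℝ) 1, |iteratedDeriv (rank m) f t| ≤ M) →
    |∫ t in (0:ℝ)..1, f t * walsh m t| ≤ ((2:ℝ) ^ neg m)⁻¹ * M := by
  intro m
  induction m using Nat.strong_induction_on with
  | _ m ih =>
  intro f hf M hM
  by_cases hm : m = 0
  · subst hm
    simp only [walsh_zero_eq, mul_one, neg_zero', pow_zero, inv_one, one_mul]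
    have hb : ∀ x ∈ Set.uIoc (0:ℝ) 1, ‖f x‖ ≤ M := by
      intro x hx
      have hx1 : x ∈ Set.Icc (0:ℝ) 1 := Set.uIoc_subset_uIcc.trans
        (by rw [Set.uIcc_of_le (by norm_num : (0:ℝ) ≤ 1)]) hx
      simpa [Real.norm_eq_abs] using (by simpa [rank_zero, iteratedDeriv_zero] using hM x hx1)
    have := intervalIntegral.norm_integral_le_of_norm_le_const hb
    simpa [Real.norm_eq_abs] using this
  · -- notation
    have hm2 : (m % 2 = 0) ∨ (m % 2 = 1) := Nat.mod_two_eq_zero_or_one m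
    have hml : m / 2 < m := Nat.div_lt_self (Nat.pos_of_ne_zero hm) one_lt_two
    set b : ℕ := m % 2 with hbdef
    set m' : ℕ := m / 2 with hm'def
    set U : Set ℝ := {x | AnalyticAt ℝ f x} with hUdef
    have hU : IsOpen U := isOpen_analyticAt ℝ f
    have hIU : Set.Icc (0:ℝ) 1 ⊆ U := hf
    have hfU : ContDiffOn ℝ (⊤ : ℕ∞) f U := fun x hx => hx.contDiffAt.contDiffWithinAt
    set c₂ : ℝ := (-1 : ℝ) ^ b * 2⁻¹ with hc₂
    have hcont : ContinuousOn f (Set.Icc 0 1) := (hfU.continuousOn).mono hIU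
    -- splitting the integral
    have huIcc1 : Set.uIcc (0:ℝ) (1/2) ⊆ Set.Icc 0 1 := by
      rw [Set.uIcc_of_le (by norm_num : (0:ℝ) ≤ 1/2)]
      exact Set.Icc_subset_Icc le_rfl (by norm_num)
    have huIcc2 : Set.uIcc (1/2:ℝ) 1 ⊆ Set.Icc 0 1 := by
      rw [Set.uIcc_of_le (by norm_num : (1/2:ℝ) ≤ 1)]
      exact Set.Icc_subset_Icc (by norm_num) le_rfl
    have huIcc3 : Set.uIcc (0:ℝ) 1 ⊆ Set.Icc 0 1 := by
      rw [Set.uIcc_of_le (by norm_num : (0:ℝ) ≤ 1)]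
    have int1 : IntervalIntegrable (fun t => f t * walsh m t) volume 0 (1/2) :=
      integrable_mul_w hcont (walsh_measurable m) (walsh_abs m) huIcc1
    have int2 : IntervalIntegrable (fun t => f t * walsh m t) volume (1/2) 1 :=
      integrable_mul_w hcont (walsh_measurable m) (walsh_abs m) huIcc2
    have split : ∫ t in (0:ℝ)..1, f t * walsh m t
        = (∫ t in (0:ℝ)..(1/2), f t * walsh m t) + ∫ t in (1/2:ℝ)..1, f t * walsh m t :=
      (intervalIntegral.integral_add_adjacent_intervals int1 int2).symm
    -- first piece
    have hA : ∫ t in (0:ℝ)..(1/2), f t * walsh m t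
        = ∫ t in (0:ℝ)..(1/2), (fun u => f (2⁻¹ * u) * walsh m' u) (2 * t) := by
      apply intervalIntegral.integral_congr_ae
      have hne : ∀ᵐ x : ℝ, x ≠ (1/2:ℝ) := by
        have h0 : MeasureTheory.volume ({(1/2:ℝ)} : Set ℝ) = 0 := Real.volume_singleton
        filter_upwards [MeasureTheory.measure_eq_zero_iff_ae_notMem.mp h0] with x hx
        simpa using hx
      filter_upwards [hne] with t ht hmem
      have htI : t ∈ Set.Ioc (0:ℝ) (1/2) := by
        rwa [Set.uIoc_of_le (by norm_num : (0:ℝ) ≤ 1/2)] at hmem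
      have htlt : t < 1/2 := lt_of_le_of_ne htI.2 ht
      have h2t : ⌊2 * t⌋ = 0 := by
        rw [Int.floor_eq_zero_iff, Set.mem_Ico]
        constructor
        · linarith [htI.1]
        · linarith
      have harg : 2⁻¹ * (2 * t) = t := by ring
      simp only [harg]
      rw [walsh_rec hm t, h2t]
      simp [mul_comm, hm'def]
    have hA2 : ∫ t in (0:ℝ)..(1/2), (fun u => f (2⁻¹ * u) * walsh m' u) (2 * t)
        = 2⁻¹ * ∫ u in (0:ℝ)..1, f (2⁻¹ * u) * walsh m' u := by
      rw [intervalIntegral.integral_comp_mul_left (fun u => f (2⁻¹ * u) * walsh m' u)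
        (two_ne_zero)]
      norm_num
    -- second piece
    have hB : ∫ t in (1/2:ℝ)..1, f t * walsh m t
        = ∫ t in (1/2:ℝ)..1,
            (fun u => f (2⁻¹ * (u + 1)) * ((-1:ℝ)^b * walsh m' u)) (2 * t + (-1)) := by
      apply intervalIntegral.integral_congr_ae
      have hne : ∀ᵐ x : ℝ, x ≠ (1:ℝ) := by
        have h0 : MeasureTheory.volume ({(1:ℝ)} : Set ℝ) = 0 := Real.volume_singleton
        filter_upwards [MeasureTheory.measure_eq_zero_iff_ae_notMem.mp h0] with x hx
        simpa using hx
      filter_upwards [hne] with t ht hmem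
      have htI : t ∈ Set.Ioc (1/2:ℝ) 1 := by
        rwa [Set.uIoc_of_le (by norm_num : (1/2:ℝ) ≤ 1)] at hmem
      have htlt : t < 1 := lt_of_le_of_ne htI.2 ht
      have h2t : ⌊2 * t⌋ = 1 := by
        rw [Int.floor_eq_iff]
        constructor
        · push_cast; linarith [htI.1]
        · push_cast; linarith
      have harg : 2⁻¹ * ((2 * t + (-1)) + 1) = t := by ring
      simp only [harg]
      rw [walsh_rec hm t, h2t]
      have hper : walsh m' (2 * t + (-1)) = walsh m' (2 * t) := by
        have := walsh_add_one m' (2 * t + (-1))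
        simpa using this.symm
      rw [hper, zpow_one]
      ring
    have hB2 : ∫ t in (1/2:ℝ)..1,
            (fun u => f (2⁻¹ * (u + 1)) * ((-1:ℝ)^b * walsh m' u)) (2 * t + (-1))
        = 2⁻¹ * ∫ u in (0:ℝ)..1, f (2⁻¹ * (u + 1)) * ((-1:ℝ)^b * walsh m' u) := by
      rw [intervalIntegral.integral_comp_mul_add
        (fun u => f (2⁻¹ * (u + 1)) * ((-1:ℝ)^b * walsh m' u)) (two_ne_zero) (-1)]
      norm_num
    -- combine
    have hcont₁ : ContinuousOn (fun u : ℝ => f (2⁻¹ * u)) (Set.Icc 0 1) := by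
      apply ContinuousOn.comp (g := f) (f := fun u : ℝ => 2⁻¹ * u) hcont
        ((continuous_const.mul continuous_id).continuousOn)
      intro u hu
      exact ⟨by linarith [hu.1], by linarith [hu.2]⟩
    have hcont₂ : ContinuousOn (fun u : ℝ => f (2⁻¹ * (u + 1))) (Set.Icc 0 1) := by
      apply ContinuousOn.comp (g := f) (f := fun u : ℝ => 2⁻¹ * (u + 1)) hcont
        ((continuous_const.mul (continuous_id.add continuous_const)).continuousOn)
      intro u hu
      exact ⟨by linarith [hu.1], by linarith [hu.2]⟩
    have intH : IntervalIntegrable (fun u => f (2⁻¹ * u) * walsh m' u) volume 0 1 :=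
      integrable_mul_w hcont₁ (walsh_measurable m') (walsh_abs m') huIcc3
    have intK : IntervalIntegrable
        (fun u => f (2⁻¹ * (u + 1)) * ((-1:ℝ)^b * walsh m' u)) volume 0 1 := by
      apply integrable_mul_w hcont₂ (measurable_const.mul (walsh_measurable m')) _ huIcc3
      intro t
      rcases hm2 with h | h <;>
        simp [h, abs_mul, walsh_abs m' t]
    have combine : (2⁻¹ * ∫ u in (0:ℝ)..1, f (2⁻¹ * u) * walsh m' u)
          + (2⁻¹ * ∫ u in (0:ℝ)..1, f (2⁻¹ * (u + 1)) * ((-1:ℝ)^b * walsh m' u))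
        = ∫ u in (0:ℝ)..1,
            (fun u => 2⁻¹ * f (2⁻¹ * u) + c₂ * f (2⁻¹ * (u + 1))) u * walsh m' u := by
      rw [← intervalIntegral.integral_const_mul, ← intervalIntegral.integral_const_mul,
        ← intervalIntegral.integral_add (intH.const_mul 2⁻¹) (intK.const_mul 2⁻¹)]
      apply intervalIntegral.integral_congr
      intro u _
      simp only [hc₂]
      ring
    have keyid : ∫ t in (0:ℝ)..1, f t * walsh m t
        = ∫ u in (0:ℝ)..1,
            (fun u => 2⁻¹ * f (2⁻¹ * u) + c₂ * f (2⁻¹ * (u + 1))) u * walsh m' u := by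
      rw [split, hA, hA2, hB, hB2, combine]
    -- analyticity of g
    set g : ℝ → ℝ := fun u => 2⁻¹ * f (2⁻¹ * u) + c₂ * f (2⁻¹ * (u + 1)) with hgdef
    have hg_an : AnalyticOnNhd ℝ g (Set.Icc 0 1) := by
      intro x hx
      have hx1 : (2⁻¹ * x) ∈ Set.Icc (0:ℝ) 1 := ⟨by linarith [hx.1], by linarith [hx.2]⟩
      have hx2 : (2⁻¹ * (x + 1)) ∈ Set.Icc (0:ℝ) 1 := ⟨by linarith [hx.1], by linarith [hx.2]⟩
      have a1 : AnalyticAt ℝ (fun u : ℝ => f (2⁻¹ * u)) x := by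
        have := (hf _ hx1).comp ((analyticAt_const (v := (2⁻¹:ℝ))).mul analyticAt_id)
        exact this
      have a2 : AnalyticAt ℝ (fun u : ℝ => f (2⁻¹ * (u + 1))) x := by
        have hplus : AnalyticAt ℝ (fun u : ℝ => u + 1) x :=
          analyticAt_id.add analyticAt_const
        have h1 : AnalyticAt ℝ (fun u : ℝ => 2⁻¹ * (u + 1)) x :=
          (analyticAt_const (v := (2⁻¹:ℝ))).mul hplus
        have := AnalyticAt.comp (g := f) (f := fun u : ℝ => 2⁻¹ * (u + 1)) (hf _ hx2) h1
        exact this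
      exact (analyticAt_const.mul a1).add (analyticAt_const.mul a2)
    -- smoothness of the two pieces on an open set
    have hV₁ : IsOpen {y : ℝ | 2⁻¹ * y ∈ U} := hU.preimage (continuous_const.mul continuous_id)
    have hV₂ : IsOpen {y : ℝ | 2⁻¹ * (y + 1) ∈ U} := hU.preimage (continuous_const.mul (continuous_id.add continuous_const))
    have hVopen : IsOpen ({y : ℝ | 2⁻¹ * y ∈ U} ∩ {y : ℝ | 2⁻¹ * (y + 1) ∈ U}) :=
      hV₁.inter hV₂
    have hIV : Set.Icc (0:ℝ) 1 ⊆ {y : ℝ | 2⁻¹ * y ∈ U} ∩ {y : ℝ | 2⁻¹ * (y + 1) ∈ U} := by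
      intro u hu
      constructor
      · exact hIU ⟨by linarith [hu.1], by linarith [hu.2]⟩
      · exact hIU ⟨by linarith [hu.1], by linarith [hu.2]⟩
    have hf₁V : ContDiffOn ℝ (⊤ : ℕ∞) (fun u : ℝ => f (2⁻¹ * u))
        ({y : ℝ | 2⁻¹ * y ∈ U} ∩ {y : ℝ | 2⁻¹ * (y + 1) ∈ U}) := by
      apply hfU.comp ((contDiff_const.mul contDiff_id).contDiffOn)
      intro y hy; exact hy.1
    have hf₂V : ContDiffOn ℝ (⊤ : ℕ∞) (fun u : ℝ => f (2⁻¹ * (u + 1)))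
        ({y : ℝ | 2⁻¹ * y ∈ U} ∩ {y : ℝ | 2⁻¹ * (y + 1) ∈ U}) := by
      apply hfU.comp ((contDiff_const.mul (contDiff_id.add contDiff_const)).contDiffOn)
      intro y hy; exact hy.2
    -- derivative formula for g
    have hdg : ∀ u ∈ Set.Icc (0:ℝ) 1, iteratedDeriv (rank m') g u
        = 2⁻¹ * (2⁻¹ ^ rank m' * iteratedDeriv (rank m') f (2⁻¹ * u))
          + c₂ * (2⁻¹ ^ rank m' * iteratedDeriv (rank m') f (2⁻¹ * (u + 1))) := by
      intro u hu
      rw [hgdef]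
      rw [itd_add_mul hVopen hf₁V hf₂V 2⁻¹ c₂ (rank m') u (hIV hu)]
      congr 1
      · congr 1
        exact itd_comp_const_mul hU hfU 2⁻¹ (rank m') u
          (hIU ⟨by linarith [hu.1], by linarith [hu.2]⟩)
      · congr 1
        have hshift : iteratedDeriv (rank m') (fun u : ℝ => f (2⁻¹ * (u + 1))) u
            = iteratedDeriv (rank m') (fun v : ℝ => f (2⁻¹ * v)) (u + 1) :=
          congrFun (iteratedDeriv_comp_add_const (rank m') (fun v : ℝ => f (2⁻¹ * v)) 1) u
        rw [hshift]
        exact itd_comp_const_mul hU hfU 2⁻¹ (rank m') (u + 1)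
          (hIU ⟨by linarith [hu.1], by linarith [hu.2]⟩)
    rw [keyid]
    -- now two cases on the parity
    rcases hm2 with hb0 | hb1
    · -- even case
      have hrank : rank m = rank m' := by rw [rank_rec hm, ← hbdef, hb0, ← hm'def]; ring
      have hneg : neg m = rank m' + neg m' := by
        rw [neg_rec hm, ← hbdef, hb0, ← hm'def]; ring
      have hc₂' : c₂ = 2⁻¹ := by rw [hc₂, hb0]; norm_num
      have hM' : ∀ t ∈ Set.Icc (0:ℝ) 1, |iteratedDeriv (rank m') g t| ≤ 2⁻¹ ^ rank m' * M := by
        intro u hu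
        rw [hdg u hu, hc₂']
        have e1 := hM (2⁻¹ * u) ⟨by linarith [hu.1], by linarith [hu.2]⟩
        have e2 := hM (2⁻¹ * (u + 1)) ⟨by linarith [hu.1], by linarith [hu.2]⟩
        rw [hrank] at e1 e2
        have hXpos : (0:ℝ) < 2⁻¹ ^ rank m' := by positivity
        calc |2⁻¹ * (2⁻¹ ^ rank m' * iteratedDeriv (rank m') f (2⁻¹ * u))
              + 2⁻¹ * (2⁻¹ ^ rank m' * iteratedDeriv (rank m') f (2⁻¹ * (u + 1)))|
            ≤ |2⁻¹ * (2⁻¹ ^ rank m' * iteratedDeriv (rank m') f (2⁻¹ * u))|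
              + |2⁻¹ * (2⁻¹ ^ rank m' * iteratedDeriv (rank m') f (2⁻¹ * (u + 1)))| :=
              abs_add_le _ _
          _ ≤ 2⁻¹ ^ rank m' * M := by
              rw [abs_mul, abs_mul, abs_mul, abs_mul]
              rw [abs_of_pos (by norm_num : (0:ℝ) < 2⁻¹), abs_of_pos hXpos]
              nlinarith [abs_nonneg (iteratedDeriv (rank m') f (2⁻¹ * u)),
                abs_nonneg (iteratedDeriv (rank m') f (2⁻¹ * (u + 1)))]
      have := ih m' hml g hg_an (2⁻¹ ^ rank m' * M) hM'
      calc |∫ u in (0:ℝ)..1, g u * walsh m' u|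
          ≤ ((2:ℝ) ^ neg m')⁻¹ * (2⁻¹ ^ rank m' * M) := this
        _ = ((2:ℝ) ^ neg m)⁻¹ * M := by
            rw [hneg, pow_add, mul_inv, inv_pow]
            ring
    · -- odd case
      have hrank : rank m = 1 + rank m' := by rw [rank_rec hm, ← hbdef, hb1]
      have hneg : neg m = 2 + rank m' + neg m' := by
        rw [neg_rec hm, ← hbdef, hb1]
      have hc₂' : c₂ = -2⁻¹ := by rw [hc₂, hb1]; norm_num
      have hmvt : ∀ u ∈ Set.Icc (0:ℝ) 1,
          |iteratedDeriv (rank m') f (2⁻¹ * u) - iteratedDeriv (rank m') f (2⁻¹ * (u + 1))|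
            ≤ M * 2⁻¹ := by
        intro u hu
        have hx : (2⁻¹ * (u + 1)) ∈ Set.Icc (0:ℝ) 1 := ⟨by linarith [hu.1], by linarith [hu.2]⟩
        have hy : (2⁻¹ * u) ∈ Set.Icc (0:ℝ) 1 := ⟨by linarith [hu.1], by linarith [hu.2]⟩
        have := Convex.norm_image_sub_le_of_norm_deriv_le
          (f := iteratedDeriv (rank m') f) (s := Set.Icc (0:ℝ) 1) (C := M)
          (fun x hx => itd_diffAt hU hfU (rank m') (hIU hx))
          (fun x hxx => by
            rw [Real.norm_eq_abs, ← iteratedDeriv_succ]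
            have : rank m' + 1 = rank m := by omega
            rw [this]
            exact hM x hxx)
          (convex_Icc 0 1) hx hy
        rw [Real.norm_eq_abs, Real.norm_eq_abs] at this
        calc |iteratedDeriv (rank m') f (2⁻¹ * u) - iteratedDeriv (rank m') f (2⁻¹ * (u + 1))|
            ≤ M * |2⁻¹ * u - 2⁻¹ * (u + 1)| := this
          _ = M * 2⁻¹ := by
              congr 1
              rw [show 2⁻¹ * u - 2⁻¹ * (u + 1) = -2⁻¹ by ring]
              norm_num
      have hM' : ∀ t ∈ Set.Icc (0:ℝ) 1,
          |iteratedDeriv (rank m') g t| ≤ 2⁻¹ ^ (rank m' + 2) * M := by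
        intro u hu
        rw [hdg u hu, hc₂']
        have hXpos : (0:ℝ) < 2⁻¹ ^ rank m' := by positivity
        have heq : 2⁻¹ * (2⁻¹ ^ rank m' * iteratedDeriv (rank m') f (2⁻¹ * u))
            + -2⁻¹ * (2⁻¹ ^ rank m' * iteratedDeriv (rank m') f (2⁻¹ * (u + 1)))
            = 2⁻¹ * 2⁻¹ ^ rank m'
              * (iteratedDeriv (rank m') f (2⁻¹ * u)
                  - iteratedDeriv (rank m') f (2⁻¹ * (u + 1))) := by ring
        rw [heq, abs_mul, abs_of_pos (by positivity : (0:ℝ) < 2⁻¹ * 2⁻¹ ^ rank m')]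
        have := hmvt u hu
        calc 2⁻¹ * 2⁻¹ ^ rank m'
              * |iteratedDeriv (rank m') f (2⁻¹ * u)
                  - iteratedDeriv (rank m') f (2⁻¹ * (u + 1))|
            ≤ 2⁻¹ * 2⁻¹ ^ rank m' * (M * 2⁻¹) := by nlinarith
          _ = 2⁻¹ ^ (rank m' + 2) * M := by ring
      have := ih m' hml g hg_an (2⁻¹ ^ (rank m' + 2) * M) hM'
      calc |∫ u in (0:ℝ)..1, g u * walsh m' u|
          ≤ ((2:ℝ) ^ neg m')⁻¹ * (2⁻¹ ^ (rank m' + 2) * M) := this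
        _ = ((2:ℝ) ^ neg m)⁻¹ * M := by
            rw [hneg, show (2:ℝ) ^ (2 + rank m' + neg m') = 2 ^ (rank m' + 2) * 2 ^ neg m' by
              rw [← pow_add]; congr 1; omega]
            rw [mul_inv, inv_pow]
            ring

/-- for an analytic `f` on `[0,T]` the Walsh coefficient
`f̂_m = (1/T)∫_0^T f(t) w_m(t/T) dt` satisfies
`|f̂_m| ≤ 2^{−p(m)} T^{r(m)} max_{t∈[0,T]} |f^{(r(m))}(t)|`. -/
theorem walsh_coefficient_bound (T : ℝ) (hT : 0 < T) (f : ℝ → ℝ)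
    (hf : AnalyticOnNhd ℝ f (Set.Icc 0 T)) (m : ℕ) :
    |(1 / T) * ∫ t in (0:ℝ)..T, f t * walsh m (t / T)| ≤
      (2 : ℝ) ^ (-(neg m : ℤ)) * T ^ rank m *
        ⨆ t : Set.Icc (0:ℝ) T, |iteratedDeriv (rank m) f t| := by
  have hT0 : T ≠ 0 := ne_of_gt hT
  set U : Set ℝ := {x | AnalyticAt ℝ f x} with hU'
  have hU : IsOpen U := isOpen_analyticAt ℝ f
  have hIU : Set.Icc (0:ℝ) T ⊆ U := hf
  have hfU : ContDiffOn ℝ (⊤ : ℕ∞) f U := fun x hx => hx.contDiffAt.contDiffWithinAt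
  set F : ℝ → ℝ := fun u => f (T * u) with hF
  have hF_an : AnalyticOnNhd ℝ F (Set.Icc 0 1) := by
    intro x hx
    have hx' : T * x ∈ Set.Icc (0:ℝ) T :=
      ⟨mul_nonneg hT.le hx.1, by nlinarith [hx.2, hx.1]⟩
    have h1 : AnalyticAt ℝ (fun u : ℝ => T * u) x := analyticAt_const.mul analyticAt_id
    have := AnalyticAt.comp (g := f) (f := fun u : ℝ => T * u) (hf _ hx') h1
    exact this
  have hsub : ∫ t in (0:ℝ)..T, f t * walsh m (t / T)
      = T * ∫ u in (0:ℝ)..1, F u * walsh m u := by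
    have hcongr : ∀ t : ℝ, f t * walsh m (t / T) = (fun u => F u * walsh m u) (T⁻¹ * t) := by
      intro t
      simp only [hF]
      rw [show T * (T⁻¹ * t) = t by field_simp]
      rw [show T⁻¹ * t = t / T by ring]
    have h1 : ∫ t in (0:ℝ)..T, f t * walsh m (t / T)
        = ∫ t in (0:ℝ)..T, (fun u => F u * walsh m u) (T⁻¹ * t) :=
      intervalIntegral.integral_congr (fun t _ => hcongr t)
    have h2 := intervalIntegral.integral_comp_mul_left (a := 0) (b := T)
      (fun u => F u * walsh m u) (inv_ne_zero hT0)
    rw [h1, h2, inv_inv, mul_zero, inv_mul_cancel₀ hT0, smul_eq_mul]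
  have hcontr : ContinuousOn (fun t => |iteratedDeriv (rank m) f t|) (Set.Icc 0 T) :=
    ((itd_contDiffOn hU hfU (rank m)).continuousOn.mono hIU).abs
  have hbdd : BddAbove (Set.range fun t : Set.Icc (0:ℝ) T
      => |iteratedDeriv (rank m) f t.1|) := by
    have him := (isCompact_Icc).bddAbove_image hcontr
    have heq : Set.range (fun t : Set.Icc (0:ℝ) T => |iteratedDeriv (rank m) f t.1|)
        = (fun t => |iteratedDeriv (rank m) f t|) '' (Set.Icc 0 T) := by
      ext y; constructor
      · rintro ⟨⟨x, hx⟩, rfl⟩; exact ⟨x, hx, rfl⟩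
      · rintro ⟨x, hx, rfl⟩; exact ⟨⟨x, hx⟩, rfl⟩
    rw [heq]; exact him
  have hnonempty : Nonempty (Set.Icc (0:ℝ) T) := ⟨⟨0, ⟨le_refl 0, hT.le⟩⟩⟩
  have hSle : ∀ x (hx : x ∈ Set.Icc (0:ℝ) T), |iteratedDeriv (rank m) f x|
      ≤ ⨆ t : Set.Icc (0:ℝ) T, |iteratedDeriv (rank m) f t.1| :=
    fun x hx => le_ciSup hbdd ⟨x, hx⟩
  have hMF : ∀ u ∈ Set.Icc (0:ℝ) 1, |iteratedDeriv (rank m) F u|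
      ≤ T ^ rank m * ⨆ t : Set.Icc (0:ℝ) T, |iteratedDeriv (rank m) f t.1| := by
    intro u hu
    have hx' : T * u ∈ Set.Icc (0:ℝ) T :=
      ⟨mul_nonneg hT.le hu.1, by nlinarith [hu.2, hu.1]⟩
    rw [hF, itd_comp_const_mul hU hfU T (rank m) u (hIU hx')]
    rw [abs_mul, abs_of_pos (pow_pos hT (rank m))]
    exact mul_le_mul_of_nonneg_left (hSle _ hx') (le_of_lt (pow_pos hT (rank m)))
  have hcore := core m F hF_an _ hMF
  rw [hsub]
  rw [show (1/T) * (T * ∫ u in (0:ℝ)..1, F u * walsh m u)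
      = ∫ u in (0:ℝ)..1, F u * walsh m u by field_simp]
  calc |∫ u in (0:ℝ)..1, F u * walsh m u|
      ≤ ((2:ℝ) ^ neg m)⁻¹
        * (T ^ rank m * ⨆ t : Set.Icc (0:ℝ) T, |iteratedDeriv (rank m) f t.1|) := hcore
    _ = (2 : ℝ) ^ (-(neg m : ℤ)) * T ^ rank m
        * ⨆ t : Set.Icc (0:ℝ) T, |iteratedDeriv (rank m) f t.1| := by
        rw [zpow_neg, zpow_natCast]
        ring
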